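/- Feasibility of the Theorem-1 policy: the rates defined by r*_n = min{ g((∑_{j=1}^{i_n} E_j - ∑_{j=1}^{i_{n-1}} g⁻¹(r*_j))/(i_n - i_{n-1})), φ⁻¹((∑_{j=1}^{i_n}(Ē_j + α H_j) - ∑_{j=1}^{i_{n-1}} φ(r*_j))/(i_n - i_{n-1})) }, assigned constantly on each block (i_{n-1}, i_n] with i_n the argmin of the same expression over i_{n-1} < i ≤ N, satisfy both cumulative constraints ∑_{i=1}^j g⁻¹(r*_i) ≤ ∑_{i=1}^j E_i and ∑_{i=1}^j φ(r*_i) ≤ ∑_{i=1}^j (Ē_i + α H_i) for every j ≤ N. -/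

import Mathlib

open Finset

/-- Feasibility half of Theorem 1: the block-constant rates defined by the
recursive min/argmin policy satisfy both cumulative energy causality
constraints (transmitter, and receiver-plus-helper). -/
theorem stmt_14 (N : ℕ) (hN : 0 < N)
    (E Ebar H : ℕ → ℝ)
    (hE : ∀ i, 0 ≤ E i) (hEbar : ∀ i, 0 ≤ Ebar i) (hH : ∀ i, 0 ≤ H i)
    (α : ℝ) (hα0 : 0 ≤ α) (hα1 : α ≤ 1)
    (g ginv : ℝ → ℝ)
    (hg : ∀ p, g p = Real.log (1 + p) / 2)
    (hginv : ∀ x, ginv x = Real.exp (2 * x) - 1)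
    (φ φinv : ℝ → ℝ)
    (hφconv : StrictConvexOn ℝ (Set.Ici 0) φ)
    (hφmono : StrictMonoOn φ (Set.Ici 0))
    (hφ0 : φ 0 = 0)
    (hφmap : ∀ x, 0 ≤ x → 0 ≤ φ x)
    (hφinv : ∀ x, 0 ≤ x → φinv (φ x) = x)
    (hφinv' : ∀ y, 0 ≤ y → φ (φinv y) = y)
    (r : ℕ → ℝ) (hr : ∀ i, 0 ≤ r i)
    (M : ℕ) (idx : ℕ → ℕ)
    (hidx0 : idx 0 = 0) (hidxM : idx M = N)
    (hidx_mono : ∀ n < M, idx n < idx (n + 1))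
    (hblock : ∀ n < M, ∀ i, idx n ≤ i → i < idx (n + 1) →
      r i = min
        (g (((∑ j ∈ range (idx (n + 1)), E j) -
              ∑ j ∈ range (idx n), ginv (r j)) /
            ((idx (n + 1) : ℝ) - (idx n : ℝ))))
        (φinv (((∑ j ∈ range (idx (n + 1)), (Ebar j + α * H j)) -
              ∑ j ∈ range (idx n), φ (r j)) /
            ((idx (n + 1) : ℝ) - (idx n : ℝ)))))
    (hargmin : ∀ n < M, ∀ i, idx n < i → i ≤ N →
      min
        (g (((∑ j ∈ range (idx (n + 1)), E j) -
              ∑ j ∈ range (idx n), ginv (r j)) /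
            ((idx (n + 1) : ℝ) - (idx n : ℝ))))
        (φinv (((∑ j ∈ range (idx (n + 1)), (Ebar j + α * H j)) -
              ∑ j ∈ range (idx n), φ (r j)) /
            ((idx (n + 1) : ℝ) - (idx n : ℝ)))) ≤
      min
        (g (((∑ j ∈ range i, E j) -
              ∑ j ∈ range (idx n), ginv (r j)) /
            ((i : ℝ) - (idx n : ℝ))))
        (φinv (((∑ j ∈ range i, (Ebar j + α * H j)) -
              ∑ j ∈ range (idx n), φ (r j)) /
            ((i : ℝ) - (idx n : ℝ))))) :
    (∀ j < N, ∑ i ∈ range (j + 1), ginv (r i) ≤ ∑ i ∈ range (j + 1), E i) ∧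
    (∀ j < N, ∑ i ∈ range (j + 1), φ (r i) ≤
      ∑ i ∈ range (j + 1), (Ebar i + α * H i)) := by
  suffices h : ∀ j, j < N →
      ((∑ i ∈ range (j + 1), ginv (r i) ≤ ∑ i ∈ range (j + 1), E i) ∧
       (∑ i ∈ range (j + 1), φ (r i) ≤ ∑ i ∈ range (j + 1), (Ebar i + α * H i))) by
    exact ⟨fun j hj => (h j hj).1, fun j hj => (h j hj).2⟩
  intro j
  induction j using Nat.strong_induction_on with
  | _ j IH =>
  intro hj
  -- locate the block containing j
  set n := Nat.findGreatest (fun n => idx n ≤ j) M with hn_def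
  have hP0 : idx 0 ≤ j := by omega
  have hns : idx n ≤ j := by
    rw [hn_def]
    exact Nat.findGreatest_spec (P := fun k => idx k ≤ j) (Nat.zero_le M) hP0
  have hnM : n < M := by
    by_contra h
    push_neg at h
    have heq : n = M := le_antisymm (Nat.findGreatest_le M) h
    rw [heq, hidxM] at hns
    omega
  have hjn1 : j < idx (n + 1) := by
    by_contra h
    push_neg at h
    exact Nat.findGreatest_is_greatest (Nat.lt_succ_self n) hnM h
  -- induction hypotheses for the prefix before the block
  have IH1 : ∑ i ∈ range (idx n), ginv (r i) ≤ ∑ i ∈ range (idx n), E i := by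
    rcases Nat.eq_zero_or_pos (idx n) with h0 | hpos
    · simp [h0]
    · have := (IH (idx n - 1) (by omega) (by omega)).1
      have hrw : idx n - 1 + 1 = idx n := by omega
      rwa [hrw] at this
  have IH2 : ∑ i ∈ range (idx n), φ (r i) ≤ ∑ i ∈ range (idx n), (Ebar i + α * H i) := by
    rcases Nat.eq_zero_or_pos (idx n) with h0 | hpos
    · simp [h0]
    · have := (IH (idx n - 1) (by omega) (by omega)).2
      have hrw : idx n - 1 + 1 = idx n := by omega
      rwa [hrw] at this
  -- the rate is constant on the block
  have hconst : ∀ i, idx n ≤ i → i < idx (n + 1) → r i = r j := by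
    intro i h1 h2
    rw [hblock n hnM i h1 h2, hblock n hnM j hns hjn1]
  -- split sums
  have hsub : idx n ≤ j + 1 := by omega
  have hsplit : ∀ f : ℝ → ℝ, ∑ i ∈ range (j + 1), f (r i)
      = ∑ i ∈ range (idx n), f (r i) + ((j + 1 - idx n : ℕ) : ℝ) * f (r j) := by
    intro f
    rw [← Finset.sum_range_add_sum_Ico _ hsub]
    congr 1
    have hcongr : ∑ i ∈ Finset.Ico (idx n) (j + 1), f (r i)
        = ∑ i ∈ Finset.Ico (idx n) (j + 1), f (r j) :=
      Finset.sum_congr rfl (fun i hi => by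
        rw [Finset.mem_Ico] at hi
        rw [hconst i hi.1 (by omega)])
    rw [hcongr, Finset.sum_const, Nat.card_Ico, nsmul_eq_mul]
  -- argmin comparison at i = j+1
  have harg := hargmin n hnM (j + 1) (by omega) (by omega)
  have hVle : r j ≤
      min
        (g (((∑ i ∈ range (j + 1), E i) - ∑ i ∈ range (idx n), ginv (r i)) /
            (((j + 1 : ℕ) : ℝ) - (idx n : ℝ))))
        (φinv (((∑ i ∈ range (j + 1), (Ebar i + α * H i)) - ∑ i ∈ range (idx n), φ (r i)) /
            (((j + 1 : ℕ) : ℝ) - (idx n : ℝ)))) := by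
    rw [hblock n hnM j hns hjn1]
    exact harg
  set A : ℝ := (∑ i ∈ range (j + 1), E i) - ∑ i ∈ range (idx n), ginv (r i) with hA
  set B : ℝ := (∑ i ∈ range (j + 1), (Ebar i + α * H i)) - ∑ i ∈ range (idx n), φ (r i) with hB
  set D : ℝ := ((j + 1 : ℕ) : ℝ) - (idx n : ℝ) with hDdef
  have hD : 0 < D := by
    have : (idx n : ℝ) < ((j + 1 : ℕ) : ℝ) := by exact_mod_cast Nat.lt_succ_of_le hns
    simp only [hDdef]
    linarith
  have hA0 : 0 ≤ A := by
    have hsE : ∑ i ∈ range (idx n), E i ≤ ∑ i ∈ range (j + 1), E i :=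
      Finset.sum_le_sum_of_subset_of_nonneg
        (Finset.range_subset_range.mpr hsub) (fun i _ _ => hE i)
    simp only [hA]
    linarith
  have hB0 : 0 ≤ B := by
    have hsE : ∑ i ∈ range (idx n), (Ebar i + α * H i) ≤ ∑ i ∈ range (j + 1), (Ebar i + α * H i) :=
      Finset.sum_le_sum_of_subset_of_nonneg
        (Finset.range_subset_range.mpr hsub)
        (fun i _ _ => by have := hEbar i; have := hH i; positivity)
    simp only [hB]
    linarith
  have h1 : r j ≤ g (A / D) := le_trans hVle (min_le_left _ _)
  have h2 : r j ≤ φinv (B / D) := le_trans hVle (min_le_right _ _)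
  have hAD : 0 ≤ A / D := div_nonneg hA0 hD.le
  have hBD : 0 ≤ B / D := div_nonneg hB0 hD.le
  -- key bound 1 : ginv (r j) ≤ A / D
  have key1 : ginv (r j) ≤ A / D := by
    rw [hg] at h1
    rw [hginv]
    have h1x : 0 < 1 + A / D := by linarith
    have hexp : Real.exp (2 * r j) ≤ Real.exp (2 * (Real.log (1 + A / D) / 2)) :=
      Real.exp_le_exp.mpr (by linarith)
    have : (2 : ℝ) * (Real.log (1 + A / D) / 2) = Real.log (1 + A / D) := by ring
    rw [this, Real.exp_log h1x] at hexp
    linarith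
  -- key bound 2 : φ (r j) ≤ B / D
  have key2 : φ (r j) ≤ B / D := by
    have hφinvnn : 0 ≤ φinv (B / D) := le_trans (hr j) h2
    have hmono := hφmono.monotoneOn (Set.mem_Ici.mpr (hr j)) (Set.mem_Ici.mpr hφinvnn) h2
    rwa [hφinv' (B / D) hBD] at hmono
  -- put things together
  have hcast : ((j + 1 - idx n : ℕ) : ℝ) = D := by
    simp only [hDdef]
    push_cast [Nat.cast_sub hsub]
    ring
  constructor
  · rw [hsplit ginv]
    have hmul : ((j + 1 - idx n : ℕ) : ℝ) * ginv (r j) ≤ D * (A / D) := by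
      rw [hcast]
      exact mul_le_mul_of_nonneg_left key1 hD.le
    rw [mul_div_cancel₀ _ (ne_of_gt hD)] at hmul
    simp only [hA] at hmul
    linarith
  · rw [hsplit φ]
    have hmul : ((j + 1 - idx n : ℕ) : ℝ) * φ (r j) ≤ D * (B / D) := by
      rw [hcast]
      exact mul_le_mul_of_nonneg_left key2 hD.le
    rw [mul_div_cancel₀ _ (ne_of_gt hD)] at hmul
    simp only [hB] at hmul
    linarith
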